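/- Let d = 2k be even with k ≥ 1 and a ≥ 2(2k+1)/(2k−1). Then d!·(binom(n+k+1,d) + a·binom(n+k,d) + binom(n+k−1,d)) = (Π_{j=−k+2}^{k−1}(n+j)) · ((a+2)n² + (a+2)n + ak(1−k) + 2k²) as polynomials in n. -/

import Mathlib

/-- Polynomial binomial coefficient `binom(x, k) = x(x-1)⋯(x-k+1)/k!` in a real variable. -/
noncomputable def rbinom (x : ℝ) (k : ℕ) : ℝ :=
  (∏ j ∈ Finset.range k, (x - (j : ℝ))) / (k.factorial : ℝ)

lemma int_insert_top (a b : ℤ) (h : a ≤ b + 1) :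
    insert (b + 1) (Finset.Icc a b) = Finset.Icc a (b + 1) := by
  ext x; simp only [Finset.mem_insert, Finset.mem_Icc]; omega

lemma int_insert_bot (a b : ℤ) (h : a ≤ b) :
    insert a (Finset.Icc (a + 1) b) = Finset.Icc a b := by
  ext x; simp only [Finset.mem_insert, Finset.mem_Icc]; omega

lemma aux_prod (m : ℕ) (n : ℝ) :
    ∏ j ∈ Finset.Icc (1 - (m : ℤ)) (m : ℤ), (n + (j : ℝ)) =
      ∏ j ∈ Finset.range (2 * m), (n + (m : ℝ) - (j : ℝ)) := by
  induction m with
  | zero => simp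
  | succ m ih =>
    have h1 : (1 - ((m + 1 : ℕ) : ℤ)) = -(m : ℤ) := by push_cast; ring
    have h2 : ((m + 1 : ℕ) : ℤ) = (m : ℤ) + 1 := by push_cast; ring
    rw [h1, h2, ← int_insert_top (-(m : ℤ)) (m : ℤ) (by omega),
      Finset.prod_insert (by simp only [Finset.mem_Icc]; omega),
      ← int_insert_bot (-(m : ℤ)) (m : ℤ) (by omega),
      Finset.prod_insert (by simp only [Finset.mem_Icc]; omega),
      show -(m : ℤ) + 1 = 1 - (m : ℤ) from by ring, ih,
      show 2 * (m + 1) = 2 * m + 1 + 1 from by ring,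
      Finset.prod_range_succ', Finset.prod_range_succ,
      Finset.prod_congr rfl
        (fun j _ => show n + ((m + 1 : ℕ) : ℝ) - ((j + 1 : ℕ) : ℝ) = n + (m : ℝ) - (j : ℝ)
          from by push_cast; ring)]
    push_cast
    ring

theorem stmt16 (k : ℕ) (hk : 1 ≤ k) (a : ℝ)
    (ha : 2 * (2 * (k : ℝ) + 1) / (2 * (k : ℝ) - 1) ≤ a) (n : ℝ) :
    ((2 * k).factorial : ℝ) *
        (rbinom (n + (k : ℝ) + 1) (2 * k) + a * rbinom (n + (k : ℝ)) (2 * k) +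
          rbinom (n + (k : ℝ) - 1) (2 * k)) =
      (∏ j ∈ Finset.Icc (-(k : ℤ) + 2) ((k : ℤ) - 1), (n + (j : ℝ))) *
        ((a + 2) * n ^ 2 + (a + 2) * n + a * (k : ℝ) * (1 - (k : ℝ)) + 2 * (k : ℝ) ^ 2) := by
  obtain ⟨m, rfl⟩ : ∃ m, k = m + 1 := ⟨k - 1, by omega⟩
  have hfac : (((2 * (m + 1)).factorial : ℕ) : ℝ) ≠ 0 := by
    exact_mod_cast (2 * (m + 1)).factorial_ne_zero
  simp only [rbinom]
  set R : ℝ := ∏ j ∈ Finset.range (2 * m), (n + (m : ℝ) - (j : ℝ)) with hR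
  have hQ : (∏ j ∈ Finset.Icc (-((m + 1 : ℕ) : ℤ) + 2) (((m + 1 : ℕ) : ℤ) - 1), (n + (j : ℝ)))
      = R := by
    rw [show (-((m + 1 : ℕ) : ℤ) + 2) = 1 - (m : ℤ) from by push_cast; ring,
      show (((m + 1 : ℕ) : ℤ) - 1) = (m : ℤ) from by push_cast; ring]
    exact aux_prod m n
  have hP1 : (∏ j ∈ Finset.range (2 * (m + 1)), (n + ((m + 1 : ℕ) : ℝ) + 1 - (j : ℝ)))
      = (n + m + 2) * (n + m + 1) * R := by
    rw [show 2 * (m + 1) = 2 * m + 1 + 1 from by ring,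
      Finset.prod_range_succ', Finset.prod_range_succ',
      Finset.prod_congr rfl
        (fun j _ => show n + ((m + 1 : ℕ) : ℝ) + 1 - ((j + 1 + 1 : ℕ) : ℝ)
            = n + (m : ℝ) - (j : ℝ) from by push_cast; ring)]
    push_cast
    ring
  have hP2 : (∏ j ∈ Finset.range (2 * (m + 1)), (n + ((m + 1 : ℕ) : ℝ) - (j : ℝ)))
      = (n + m + 1) * (n - m) * R := by
    rw [show 2 * (m + 1) = 2 * m + 1 + 1 from by ring,
      Finset.prod_range_succ, Finset.prod_range_succ',
      Finset.prod_congr rfl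
        (fun j _ => show n + ((m + 1 : ℕ) : ℝ) - ((j + 1 : ℕ) : ℝ)
            = n + (m : ℝ) - (j : ℝ) from by push_cast; ring)]
    push_cast
    ring
  have hP3 : (∏ j ∈ Finset.range (2 * (m + 1)), (n + ((m + 1 : ℕ) : ℝ) - 1 - (j : ℝ)))
      = (n - m) * (n - m - 1) * R := by
    rw [show 2 * (m + 1) = 2 * m + 1 + 1 from by ring,
      Finset.prod_range_succ, Finset.prod_range_succ,
      Finset.prod_congr rfl
        (fun j _ => show n + ((m + 1 : ℕ) : ℝ) - 1 - ((j : ℕ) : ℝ)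
            = n + (m : ℝ) - (j : ℝ) from by push_cast; ring)]
    push_cast
    ring
  rw [hQ, hP1, hP2, hP3]
  field_simp
  push_cast
  ring
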